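/- arXiv:1804.04943 — 3 statements merged into one kernel-verified Lean document; each statement's English description precedes it below -/
import Mathlib

section
/- For any constants a_1,…,a_d and any 1 ≤ k ≤ d, if ∏_{i=1}^{d}(1 + a_i·x·d/dx) e^x = p(x)·e^x with p a polynomial, then the coefficient of x^k in p(x) is Σ_{j=k}^{d} E_j(a_1,…,a_d)·S(j,k), where E_j is the j-th elementary symmetric polynomial and S(j,k) is a Stirling number of the second kind. -/
open Finset

/-- Stirling numbers of the second kind: `stirling2 n k` is the number of partitions of an
`n`-element set into `k` nonempty blocks. -/
def stirling2 : ℕ → ℕ → ℕ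
  | 0, 0 => 1
  | 0, _ + 1 => 0
  | _ + 1, 0 => 0
  | n + 1, k + 1 => (k + 1) * stirling2 n (k + 1) + stirling2 n k

/-- Unsigned Stirling numbers of the first kind: `stirling1 n k` counts permutations of `n`
elements with exactly `k` disjoint cycles. -/
def stirling1 : ℕ → ℕ → ℕ
  | 0, 0 => 1
  | 0, _ + 1 => 0
  | _ + 1, 0 => 0
  | n + 1, k + 1 => n * stirling1 n (k + 1) + stirling1 n k

/-- The `j`-th elementary symmetric polynomial in `d` variables, evaluated at `a`. -/
def esymm (d j : ℕ) (a : Fin d → ℝ) : ℝ :=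
  ∑ s ∈ Finset.powersetCard j (Finset.univ : Finset (Fin d)), ∏ i ∈ s, a i

/-- The operator `x·d/dx` acting on functions. -/
noncomputable def thetaOp (f : ℝ → ℝ) : ℝ → ℝ := fun x => x * deriv f x

/-- The operator `1 + a·x·d/dx` acting on functions. -/
noncomputable def eulerOp (a : ℝ) (f : ℝ → ℝ) : ℝ → ℝ := fun x => f x + a * x * deriv f x

/-- The composite operator `∏_{i=1}^d (1 + aᵢ·x·d/dx)`. -/
noncomputable def opProd (d : ℕ) (a : Fin d → ℝ) : (ℝ → ℝ) → ℝ → ℝ :=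
  (List.ofFn fun i : Fin d => eulerOp (a i)).foldr (· ∘ ·) id

/- ## Auxiliary machinery -/

open Polynomial

/-- polynomial version of θ = x d/dx acting on `P·eˣ` : `P ↦ X·P' + X·P`. -/
noncomputable def thetaP (P : Polynomial ℝ) : Polynomial ℝ := X * derivative P + X * P

/-- Touchard/Bell polynomials : θʲ eˣ = (touchard j)·eˣ. -/
noncomputable def touchard : ℕ → Polynomial ℝ
  | 0 => 1
  | j + 1 => thetaP (touchard j)

/-- polynomial version of `1 + a·θ`. -/
noncomputable def euT (c : ℝ) (P : Polynomial ℝ) : Polynomial ℝ := P + C c * thetaP P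

/-- the polynomial `Q` with `∏ (1 + cᵢ θ) eˣ = Q·eˣ`. -/
noncomputable def QL : List ℝ → Polynomial ℝ
  | [] => 1
  | c :: l => euT c (QL l)

lemma stirling2_eq_zero : ∀ {j k : ℕ}, j < k → stirling2 j k = 0
  | 0, _ + 1, _ => rfl
  | _ + 1, _ + 1, h => by
    rw [stirling2, stirling2_eq_zero (by omega), stirling2_eq_zero (by omega)]
    ring

lemma thetaP_coeff_zero (P : Polynomial ℝ) : (thetaP P).coeff 0 = 0 := by
  simp [thetaP, coeff_add, mul_coeff_zero]

lemma thetaP_coeff_succ (P : Polynomial ℝ) (k : ℕ) :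
    (thetaP P).coeff (k + 1) = (k + 1) * P.coeff (k + 1) + P.coeff k := by
  simp [thetaP, coeff_add, coeff_X_mul, coeff_derivative]
  ring

lemma touchard_coeff : ∀ (j k : ℕ), (touchard j).coeff k = (stirling2 j k : ℝ)
  | 0, 0 => by simp [touchard, stirling2]
  | 0, k + 1 => by simp [touchard, stirling2, coeff_one]
  | j + 1, 0 => by
    show (thetaP (touchard j)).coeff 0 = ((stirling2 (j+1) 0 : ℕ) : ℝ)
    rw [thetaP_coeff_zero]; simp [stirling2]
  | j + 1, k + 1 => by
    show (thetaP (touchard j)).coeff (k+1) = _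
    rw [thetaP_coeff_succ, touchard_coeff j (k+1), touchard_coeff j k]
    show _ = ((((k+1) * stirling2 j (k+1) + stirling2 j k : ℕ)) : ℝ)
    push_cast
    ring

lemma thetaP_add (P Q : Polynomial ℝ) : thetaP (P + Q) = thetaP P + thetaP Q := by
  simp [thetaP, derivative_add]; ring

lemma thetaP_C_mul (c : ℝ) (P : Polynomial ℝ) : thetaP (C c * P) = C c * thetaP P := by
  simp [thetaP, derivative_C_mul]; ring

lemma thetaP_sum {ι : Type*} (s : Finset ι) (f : ι → Polynomial ℝ) :
    thetaP (∑ i ∈ s, f i) = ∑ i ∈ s, thetaP (f i) := by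
  classical
  induction s using Finset.induction with
  | empty => simp [thetaP]
  | insert _ _ h ih => simp [Finset.sum_insert h, thetaP_add, ih]

lemma eulerOp_eval (c : ℝ) (P : Polynomial ℝ) :
    eulerOp c (fun x => P.eval x * Real.exp x) = fun x => (euT c P).eval x * Real.exp x := by
  funext x
  have hd : deriv (fun x => P.eval x * Real.exp x) x
      = P.derivative.eval x * Real.exp x + P.eval x * Real.exp x :=
    ((P.hasDerivAt x).mul (Real.hasDerivAt_exp x)).deriv
  simp only [eulerOp, hd, euT, thetaP, eval_add, eval_mul, eval_X, eval_C]
  ring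

lemma foldr_exp : ∀ l : List ℝ,
    (l.map eulerOp).foldr (· ∘ ·) id Real.exp = fun x => (QL l).eval x * Real.exp x
  | [] => by funext x; simp [QL]
  | c :: l => by
    show eulerOp c ((l.map eulerOp).foldr (· ∘ ·) id Real.exp) = _
    rw [foldr_exp l, eulerOp_eval]
    rfl

lemma esymm_cons (c : ℝ) (s : Multiset ℝ) (j : ℕ) :
    (c ::ₘ s).esymm (j + 1) = s.esymm (j + 1) + c * s.esymm j := by
  simp [Multiset.esymm, Multiset.powersetCard_cons, Multiset.map_map, Function.comp,
    Multiset.prod_cons, Multiset.sum_map_mul_left]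

lemma QL_eq : ∀ l : List ℝ,
    QL l = ∑ j ∈ Finset.range (l.length + 1), C ((l : Multiset ℝ).esymm j) * touchard j
  | [] => by simp [QL, Multiset.esymm, touchard]
  | c :: l => by
    set n := l.length with hn
    have e := fun j => (l : Multiset ℝ).esymm j
    have hz : (l : Multiset ℝ).esymm (n + 1) = 0 := by
      simp [Multiset.esymm,
        Multiset.powersetCard_eq_empty (s := (l : Multiset ℝ)) (n + 1) (by simp [hn])]
    have hcast : ((c :: l : List ℝ) : Multiset ℝ) = c ::ₘ (l : Multiset ℝ) := rfl
    show euT c (QL l) = _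
    rw [euT, QL_eq l, thetaP_sum]
    simp only [thetaP_C_mul]
    have htou : ∀ j : ℕ, thetaP (touchard j) = touchard (j + 1) := fun j => rfl
    simp only [htou]
    rw [Finset.mul_sum]
    simp only [← mul_assoc, ← C_mul]
    -- LHS = ∑_{j<n+1} C(e j)·B j + ∑_{j<n+1} C(c·e j)·B (j+1)
    have hL : ∑ j ∈ Finset.range (n + 1), C ((l : Multiset ℝ).esymm j) * touchard j
        = ∑ j ∈ Finset.range (n + 1), C ((l : Multiset ℝ).esymm (j+1)) * touchard (j+1)
          + C ((l : Multiset ℝ).esymm 0) * touchard 0 := by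
      have h2 : ∑ j ∈ Finset.range (n + 2), C ((l : Multiset ℝ).esymm j) * touchard j
          = ∑ j ∈ Finset.range (n + 1), C ((l : Multiset ℝ).esymm j) * touchard j := by
        rw [Finset.sum_range_succ, hz]; simp
      rw [← h2, Finset.sum_range_succ']
    rw [hL]
    -- RHS
    rw [show (c :: l : List ℝ).length = n + 1 from by simp [hn]]
    rw [Finset.sum_range_succ' (fun j => C (((c :: l : List ℝ) : Multiset ℝ).esymm j) * touchard j) (n+1)]
    have hE0 : ((c :: l : List ℝ) : Multiset ℝ).esymm 0 = 1 := by simp [Multiset.esymm]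
    have hE : ∀ j, ((c :: l : List ℝ) : Multiset ℝ).esymm (j + 1)
        = (l : Multiset ℝ).esymm (j + 1) + c * (l : Multiset ℝ).esymm j := by
      intro j; rw [hcast, esymm_cons]
    simp only [hE, hE0, C_add, C_mul, add_mul]
    rw [Finset.sum_add_distrib]
    have hE0' : (l : Multiset ℝ).esymm 0 = 1 := by simp [Multiset.esymm]
    rw [hE0']
    ring

theorem coeff_eq_esymm_stirling (d : ℕ) (a : Fin d → ℝ) (k : ℕ) (hk1 : 1 ≤ k) (hkd : k ≤ d)
    (p : Polynomial ℝ)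
    (hp : opProd d a Real.exp = fun x => p.eval x * Real.exp x) :
    p.coeff k = ∑ j ∈ Finset.Icc k d, esymm d j a * (stirling2 j k : ℝ) := by
  have hopl : opProd d a Real.exp = fun x => (QL (List.ofFn a)).eval x * Real.exp x := by
    unfold opProd
    rw [show (List.ofFn fun i => eulerOp (a i)) = (List.ofFn a).map eulerOp from
      (List.map_ofFn (f := a) (g := eulerOp)).symm]
    exact foldr_exp _
  have hpq : p = QL (List.ofFn a) := by
    apply Polynomial.funext
    intro x
    have h := congrFun (hp.symm.trans hopl) x
    exact mul_right_cancel₀ (Real.exp_ne_zero x) h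
  have hesymm : ∀ j, ((List.ofFn a : List ℝ) : Multiset ℝ).esymm j = esymm d j a := by
    intro j
    rw [← Fin.univ_val_map a, Finset.esymm_map_val]
    rfl
  rw [hpq, QL_eq, finset_sum_coeff]
  simp only [coeff_C_mul, touchard_coeff, hesymm, List.length_ofFn]
  refine (Finset.sum_subset ?_ ?_).symm
  · intro j hj
    simp only [Finset.mem_Icc] at hj
    simp only [Finset.mem_range]
    omega
  · intro j hj hj'
    simp only [Finset.mem_range] at hj
    simp only [Finset.mem_Icc] at hj'
    rw [stirling2_eq_zero (by omega)]
    simp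
end

section
/- For all natural numbers n ≥ 1 and 0 ≤ k ≤ n: Σ_{j=k}^{n} E_j(1, 1/2, 1/3, …, 1/n)·S(j,k) = (n choose k)/k!, where E_j is the j-th elementary symmetric polynomial in n variables (with E_0 = 1 and the j = k = 0 term interpreted via S(0,0) = 1) and S(j,k) is the Stirling number of the second kind. -/
open Finset

/-! ### Auxiliary lemmas -/

lemma my_esymm_zero (d : ℕ) (a : Fin d → ℝ) : esymm d 0 a = 1 := by
  simp [esymm]

lemma my_esymm_of_gt (d j : ℕ) (h : d < j) (a : Fin d → ℝ) : esymm d j a = 0 := by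
  rw [esymm, Finset.powersetCard_eq_empty.2 (by simpa using h), Finset.sum_empty]

lemma my_esymm_succ (n j : ℕ) (a : Fin (n+1) → ℝ) :
    esymm (n+1) (j+1) a
      = esymm n (j+1) (a ∘ Fin.castSucc) + a (Fin.last n) * esymm n j (a ∘ Fin.castSucc) := by
  classical
  have hlast : Fin.last n ∉ (Finset.univ : Finset (Fin n)).map Fin.castSuccEmb := by
    simp [Fin.castSuccEmb]
    intro x
    exact Fin.castSucc_lt_last x |>.ne
  have hmem : ∀ (m : ℕ) (s : Finset (Fin (n+1))),
      s ∈ powersetCard m ((Finset.univ : Finset (Fin n)).map Fin.castSuccEmb) →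
      Fin.last n ∉ s := by
    intro m s hs hls
    exact hlast ((Finset.mem_powersetCard.1 hs).1 hls)
  unfold esymm
  rw [Fin.univ_castSuccEmb, Finset.cons_eq_insert, powersetCard_succ_insert hlast,
    Finset.sum_union (by
      rw [Finset.disjoint_left]
      intro s hs hs'
      obtain ⟨t, ht, rfl⟩ := Finset.mem_image.1 hs'
      exact hmem _ _ hs (Finset.mem_insert_self _ _))]
  congr 1
  · rw [powersetCard_map, Finset.sum_map]
    refine Finset.sum_congr rfl fun s _ => ?_
    rw [show ((mapEmbedding Fin.castSuccEmb).toEmbedding s) = s.map Fin.castSuccEmb from rfl,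
      Finset.prod_map]
    rfl
  · rw [Finset.sum_image (fun s hs t ht hst => by
      have h1 := hmem _ _ hs
      have h2 := hmem _ _ ht
      have := congrArg (·.erase (Fin.last n)) hst
      simpa [Finset.erase_insert h1, Finset.erase_insert h2] using this)]
    rw [Finset.mul_sum, powersetCard_map, Finset.sum_map]
    refine Finset.sum_congr rfl fun s hs => ?_
    rw [show ((mapEmbedding Fin.castSuccEmb).toEmbedding s) = s.map Fin.castSuccEmb from rfl,
      Finset.prod_insert (hmem _ _ (by rw [powersetCard_map]; exact Finset.mem_map_of_mem _ hs)),
      Finset.prod_map]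
    rfl

/-- Recursive description of `esymm` evaluated at the reciprocals. -/
noncomputable def eRec : ℕ → ℕ → ℝ
  | _, 0 => 1
  | 0, _ + 1 => 0
  | n + 1, j + 1 => eRec n (j+1) + (1 / ((n : ℝ) + 1)) * eRec n j

lemma eRec_of_gt : ∀ n j : ℕ, n < j → eRec n j = 0 := by
  intro n
  induction n with
  | zero => intro j hj; cases j with
    | zero => omega
    | succ j => rfl
  | succ n ih =>
    intro j hj
    cases j with
    | zero => omega
    | succ j =>
      rw [eRec, ih _ (by omega), ih _ (by omega), mul_zero, add_zero]

lemma esymm_eq_eRec : ∀ n j : ℕ, esymm n j (fun i => (1 : ℝ) / (i.1 + 1)) = eRec n j := by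
  intro n
  induction n with
  | zero =>
    intro j
    cases j with
    | zero => rw [my_esymm_zero]; rfl
    | succ j => rw [my_esymm_of_gt 0 (j+1) (Nat.succ_pos j)]; rfl
  | succ n ih =>
    intro j
    cases j with
    | zero => rw [my_esymm_zero]; rfl
    | succ j =>
      rw [my_esymm_succ]
      have hc : ((fun i : Fin (n+1) => (1 : ℝ) / (i.1 + 1)) ∘ Fin.castSucc)
          = fun i : Fin n => (1 : ℝ) / (i.1 + 1) := by
        funext i
        simp [Fin.castSucc]
      rw [hc, ih, ih]
      show eRec n (j+1) + (1 / (((Fin.last n).1 : ℝ) + 1)) * eRec n j = eRec (n+1) (j+1)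
      rw [eRec]
      norm_num [Fin.last]
    
lemma stirling2_eq_zero_of_lt : ∀ j k : ℕ, j < k → stirling2 j k = 0 := by
  intro j
  induction j with
  | zero => intro k hk; cases k with
    | zero => omega
    | succ k => rfl
  | succ j ih =>
    intro k hk
    cases k with
    | zero => omega
    | succ k =>
      rw [stirling2, ih _ (by omega), ih _ (by omega), mul_zero, zero_add]

lemma choose_aux (n k : ℕ) : (n+1) * n.choose k = (k+1) * (n.choose (k+1) + n.choose k) := by
  rcases le_or_gt k n with h | h
  · have h1 := Nat.choose_succ_right_eq n k
    have h2 : n - k + (k + 1) = n + 1 := by omega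
    calc (n+1) * n.choose k = n.choose k * (n - k) + n.choose k * (k+1) := by
          rw [← Nat.mul_add, h2, Nat.mul_comm]
      _ = (k+1) * (n.choose (k+1) + n.choose k) := by rw [← h1]; ring
  · rw [Nat.choose_eq_zero_of_lt h, Nat.choose_eq_zero_of_lt (by omega), Nat.mul_zero,
      Nat.zero_add, Nat.mul_zero]

lemma arith_aux (A B kf nn kk : ℝ) (hkf : kf ≠ 0) (hk1 : kk + 1 ≠ 0) (hn1 : nn + 1 ≠ 0)
    (hch : (nn+1) * A = (kk+1) * (B + A)) :
    B / ((kk+1)*kf) + 1/(nn+1) * ((kk+1) * (B / ((kk+1)*kf)) + A / kf)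
      = (A + B) / ((kk+1)*kf) := by
  have h2 : (kk+1) * (B / ((kk+1)*kf)) = B / kf := by
    field_simp
  rw [h2, ← add_div, one_div, inv_mul_eq_div, div_div,
    div_add_div _ _ (mul_ne_zero hk1 hkf) (mul_ne_zero hkf hn1),
    div_eq_div_iff (mul_ne_zero (mul_ne_zero hk1 hkf) (mul_ne_zero hkf hn1)) (mul_ne_zero hk1 hkf)]
  linear_combination (-(kk+1)*kf^2)*hch

lemma main_sum : ∀ n k : ℕ,
    ∑ j ∈ Finset.range (n+1), eRec n j * (stirling2 j k : ℝ)
      = (n.choose k : ℝ) / (k.factorial : ℝ) := by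
  intro n
  induction n with
  | zero =>
    intro k
    cases k with
    | zero =>
      rw [Finset.sum_range_one]
      show (1 : ℝ) * ((1 : ℕ) : ℝ) = _
      norm_num
    | succ k =>
      rw [Finset.sum_range_one, show stirling2 0 (k+1) = 0 from rfl, Nat.choose_eq_zero_of_lt (Nat.succ_pos k)]
      norm_num
  | succ n ih =>
    intro k
    cases k with
    | zero =>
      rw [Finset.sum_range_succ']
      have hz : ∀ j ∈ Finset.range (n+1), eRec (n+1) (j+1) * (stirling2 (j+1) 0 : ℝ) = 0 := by
        intro j _
        rw [show stirling2 (j+1) 0 = 0 from rfl]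
        simp
      rw [Finset.sum_congr rfl hz, Finset.sum_const_zero, zero_add]
      show eRec (n+1) 0 * ((1 : ℕ) : ℝ) = _
      simp [eRec]
    | succ k =>
      rw [Finset.sum_range_succ']
      have hz : eRec (n+1) 0 * (stirling2 0 (k+1) : ℝ) = 0 := by
        rw [show stirling2 0 (k+1) = 0 from rfl]; simp
      rw [hz, add_zero]
      set c : ℝ := 1 / ((n : ℝ) + 1) with hc
      have hrec : ∀ j, eRec (n+1) (j+1) = eRec n (j+1) + c * eRec n j := fun j => rfl
      have hst : ∀ j, (stirling2 (j+1) (k+1) : ℝ)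
          = (k+1) * (stirling2 j (k+1) : ℝ) + (stirling2 j k : ℝ) := by
        intro j
        rw [show stirling2 (j+1) (k+1) = (k+1) * stirling2 j (k+1) + stirling2 j k from rfl]
        push_cast
        ring
      have split : ∀ j, eRec (n+1) (j+1) * (stirling2 (j+1) (k+1) : ℝ)
          = eRec n (j+1) * (stirling2 (j+1) (k+1) : ℝ)
            + c * ((k+1) * (eRec n j * (stirling2 j (k+1) : ℝ)) + eRec n j * (stirling2 j k : ℝ)) := by
        intro j
        rw [hrec j, hst j]
        ring
      rw [Finset.sum_congr rfl (fun j _ => split j), Finset.sum_add_distrib, ← Finset.mul_sum,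
        Finset.sum_add_distrib, ← Finset.mul_sum]
      have h1 : ∑ j ∈ Finset.range (n+1), eRec n (j+1) * (stirling2 (j+1) (k+1) : ℝ)
          = ∑ j ∈ Finset.range (n+1), eRec n j * (stirling2 j (k+1) : ℝ) := by
        have e1 := Finset.sum_range_succ' (fun j => eRec n j * (stirling2 j (k+1) : ℝ)) (n+1)
        have e2 := Finset.sum_range_succ (fun j => eRec n j * (stirling2 j (k+1) : ℝ)) (n+1)
        have z0 : eRec n 0 * (stirling2 0 (k+1) : ℝ) = 0 := by
          rw [show stirling2 0 (k+1) = 0 from rfl]; simp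
        have zn : eRec n (n+1) * (stirling2 (n+1) (k+1) : ℝ) = 0 := by
          rw [eRec_of_gt n (n+1) (by omega)]; simp
        simp only [z0, add_zero] at e1
        rw [zn, add_zero] at e2
        rw [← e1, e2]
      rw [h1, ih, ih]
      -- arithmetic
      have hpascal : ((n+1).choose (k+1) : ℝ) = (n.choose k : ℝ) + (n.choose (k+1) : ℝ) := by
        exact_mod_cast Nat.choose_succ_succ n k
      have hch : ((n : ℝ)+1) * (n.choose k : ℝ)
          = ((k : ℝ)+1) * ((n.choose (k+1) : ℝ) + (n.choose k : ℝ)) := by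
        exact_mod_cast choose_aux n k
      have hfac : ((k+1).factorial : ℝ) = ((k : ℝ)+1) * (k.factorial : ℝ) := by
        rw [Nat.factorial_succ]; push_cast; ring
      have hk0 : (k.factorial : ℝ) ≠ 0 := Nat.cast_ne_zero.2 k.factorial_ne_zero
      have hk1 : ((k : ℝ)+1) ≠ 0 := by positivity
      have hn1 : ((n : ℝ)+1+1) ≠ 0 := by positivity
      rw [hc, hfac, hpascal]
      exact arith_aux (n.choose k : ℝ) (n.choose (k+1) : ℝ) (k.factorial : ℝ) (n : ℝ) (k : ℝ)
        hk0 hk1 (by positivity) hch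

theorem esymm_reciprocal_stirling (n : ℕ) (hn : 1 ≤ n) (k : ℕ) (hk : k ≤ n) :
    ∑ j ∈ Finset.Icc k n, esymm n j (fun i => (1 : ℝ) / (i.1 + 1)) * (stirling2 j k : ℝ) =
      (n.choose k : ℝ) / (k.factorial : ℝ) := by
  have hsub : Finset.Icc k n ⊆ Finset.range (n+1) := by
    intro j hj
    rw [Finset.mem_Icc] at hj
    rw [Finset.mem_range]
    omega
  rw [Finset.sum_subset hsub (fun j hj hj' => by
    rw [Finset.mem_range] at hj
    rw [Finset.mem_Icc] at hj'
    rw [stirling2_eq_zero_of_lt j k (by omega)]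
    simp)]
  calc ∑ j ∈ Finset.range (n+1), esymm n j (fun i => (1 : ℝ) / (i.1 + 1)) * (stirling2 j k : ℝ)
      = ∑ j ∈ Finset.range (n+1), eRec n j * (stirling2 j k : ℝ) := by
        refine Finset.sum_congr rfl fun j _ => ?_
        rw [esymm_eq_eRec]
    _ = (n.choose k : ℝ) / (k.factorial : ℝ) := main_sum n k
end

section
/- For all n ≥ 1, ∏_{j=1}^{n} (1 + (1/j)·x·d/dx) applied to e^x equals p(x)·e^x where p(x) = Σ_{j=0}^{n} (1/j!)·(n choose j)·x^j. -/
open Finset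

open Polynomial in
/-- The "conjugated" operator on polynomials: `e^{-x} · (x d/dx) (p·e^x) = x·(p' + p)`. -/
noncomputable def Mop (p : Polynomial ℝ) : Polynomial ℝ := X * (derivative p + p)

open Polynomial in
/-- Conjugated Euler operator on polynomials. -/
noncomputable def Tc (c : ℝ) (p : Polynomial ℝ) : Polynomial ℝ := p + C c * Mop p

lemma Mop_add (p q : Polynomial ℝ) : Mop (p + q) = Mop p + Mop q := by
  simp [Mop]; ring

lemma Mop_C_mul (c : ℝ) (p : Polynomial ℝ) :
    Mop (Polynomial.C c * p) = Polynomial.C c * Mop p := by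
  simp [Mop]; ring

lemma Tc_comm (c c' : ℝ) (p : Polynomial ℝ) : Tc c (Tc c' p) = Tc c' (Tc c p) := by
  simp only [Tc, Mop_add, Mop_C_mul]
  ring

lemma eulerOp_poly (c : ℝ) (p : Polynomial ℝ) :
    eulerOp c (fun x => p.eval x * Real.exp x) = fun x => (Tc c p).eval x * Real.exp x := by
  funext x
  unfold eulerOp
  have hd : deriv (fun x => p.eval x * Real.exp x) x
      = (Polynomial.derivative p).eval x * Real.exp x + p.eval x * Real.exp x := by
    rw [deriv_fun_mul (p.differentiableAt) (Real.differentiable_exp _)]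
    simp [Polynomial.deriv, Real.deriv_exp]
  rw [hd]
  simp [Tc, Mop]
  ring

noncomputable def Rn : ℕ → Polynomial ℝ → Polynomial ℝ
  | 0, p => p
  | n + 1, p => Rn n (Tc (((n : ℝ) + 1))⁻¹ p)

lemma Rn_Tc (n : ℕ) (c : ℝ) (p : Polynomial ℝ) : Rn n (Tc c p) = Tc c (Rn n p) := by
  induction n generalizing p with
  | zero => rw [Rn.eq_1, Rn.eq_1]
  | succ n ih => rw [Rn.eq_2, Rn.eq_2, Tc_comm, ih]

open Polynomial in
noncomputable def pPoly (n : ℕ) : Polynomial ℝ :=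
  ∑ j ∈ Finset.range (n + 1), C ((1 / (j.factorial : ℝ)) * (n.choose j : ℝ)) * X ^ j

lemma pPoly_coeff (n k : ℕ) :
    (pPoly n).coeff k = if k ≤ n then (1 / (k.factorial : ℝ)) * (n.choose k : ℝ) else 0 := by
  rw [pPoly, Polynomial.finset_sum_coeff]
  simp only [Polynomial.coeff_C_mul, Polynomial.coeff_X_pow, mul_ite, mul_one, mul_zero]
  rw [Finset.sum_ite_eq (Finset.range (n+1)) k]
  simp [Nat.lt_succ_iff]

lemma Tc_coeff_succ (c : ℝ) (p : Polynomial ℝ) (k : ℕ) :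
    (Tc c p).coeff (k + 1)
      = p.coeff (k + 1) + c * (p.coeff (k + 1) * (k + 1) + p.coeff k) := by
  simp [Tc, Mop, Polynomial.coeff_X_mul, Polynomial.coeff_derivative]

lemma Tc_pPoly (n : ℕ) : Tc (((n : ℝ) + 1))⁻¹ (pPoly n) = pPoly (n + 1) := by
  have hn1 : ((n : ℝ) + 1) ≠ 0 := by positivity
  ext k
  rcases k with _ | k
  · simp [Tc, Mop, Polynomial.mul_coeff_zero, pPoly_coeff]
  · rw [Tc_coeff_succ]
    rcases lt_or_ge n k with h | h
    · have h1 : ¬ (k + 1 ≤ n) := by omega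
      have h2 : ¬ (k ≤ n) := by omega
      have h3 : ¬ (k + 1 ≤ n + 1) := by omega
      simp [pPoly_coeff, h1, h2, h3]
    · rcases eq_or_lt_of_le h with rfl | h'
      · have h1 : ¬ (k + 1 ≤ k) := by omega
        simp [pPoly_coeff, h1, Nat.factorial_succ]
        field_simp
      · have h1 : k + 1 ≤ n := h'
        have h2 : k ≤ n := by omega
        have h3 : k + 1 ≤ n + 1 := by omega
        simp only [pPoly_coeff, h1, h2, h3, if_true]
        have hpascal : (((n + 1).choose (k + 1) : ℕ) : ℝ)
            = (n.choose (k + 1) : ℝ) + (n.choose k : ℝ) := by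
          rw [Nat.choose_succ_succ]; push_cast; ring
        have hch : (n.choose (k + 1) : ℝ) * ((k : ℝ) + 1)
            = (n.choose k : ℝ) * ((n : ℝ) - k) := by
          have := Nat.choose_succ_right_eq n k
          have hc : (((n.choose (k+1)) * (k+1) : ℕ) : ℝ) = ((n.choose k * (n - k) : ℕ) : ℝ) := by
            exact_mod_cast congrArg (Nat.cast (R := ℝ)) this
          push_cast [Nat.cast_sub h2] at hc
          linarith
        have hfact : (((k + 1).factorial : ℕ) : ℝ) = ((k : ℝ) + 1) * (k.factorial : ℝ) := by
          rw [Nat.factorial_succ]; push_cast; ring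
        have hkf : (k.factorial : ℝ) ≠ 0 := by positivity
        have hk1 : ((k : ℝ) + 1) ≠ 0 := by positivity
        have hch' : (n.choose (k + 1) : ℝ) * ((k : ℝ) + 1)
            = (n.choose k : ℝ) * (((n : ℝ) + 1) - ((k : ℝ) + 1)) := by linarith [hch]
        rw [hpascal, hfact]
        set K : ℝ := (k : ℝ) + 1 with hK
        set N : ℝ := (n : ℝ) + 1 with hN
        set F : ℝ := (k.factorial : ℝ) with hF
        clear_value K N F
        field_simp
        linear_combination hch'

lemma Rn_one (n : ℕ) : Rn n (1 : Polynomial ℝ) = pPoly n := by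
  induction n with
  | zero =>
    show (1 : Polynomial ℝ) = pPoly 0
    simp [pPoly]
  | succ n ih =>
    show Rn n (Tc (((n : ℝ) + 1))⁻¹ 1) = pPoly (n + 1)
    rw [Rn_Tc, ih, Tc_pPoly]

lemma foldr_comp_eq (l : List ((ℝ → ℝ) → ℝ → ℝ)) (g : (ℝ → ℝ) → ℝ → ℝ) :
    l.foldr (· ∘ ·) g = l.foldr (· ∘ ·) id ∘ g := by
  induction l with
  | nil => rfl
  | cons f t ih => simp only [List.foldr_cons, ih]; rfl

lemma opProd_succ (n : ℕ) (a : Fin (n + 1) → ℝ) :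
    opProd (n + 1) a = opProd n (fun i => a i.castSucc) ∘ eulerOp (a (Fin.last n)) := by
  unfold opProd
  rw [List.ofFn_succ', List.concat_eq_append, List.foldr_append]
  simp only [List.foldr_cons, List.foldr_nil, Function.comp_id]
  exact foldr_comp_eq _ _

lemma opProd_poly (n : ℕ) (p : Polynomial ℝ) :
    opProd n (fun i => (1 : ℝ) / (i.1 + 1)) (fun x => p.eval x * Real.exp x)
      = fun x => (Rn n p).eval x * Real.exp x := by
  induction n generalizing p with
  | zero => rfl
  | succ n ih =>
    rw [opProd_succ]
    have hlast : (1 : ℝ) / (((Fin.last n).1 : ℝ) + 1) = ((n : ℝ) + 1)⁻¹ := by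
      simp [Fin.last, one_div]
    show opProd n _ (eulerOp ((1 : ℝ) / (((Fin.last n).1 : ℝ) + 1))
        (fun x => p.eval x * Real.exp x)) = _
    rw [hlast, eulerOp_poly]
    have hcast : (fun i : Fin n => (1 : ℝ) / (((Fin.castSucc i).1 : ℝ) + 1))
        = fun i : Fin n => (1 : ℝ) / ((i.1 : ℝ) + 1) := rfl
    rw [hcast, ih]
    rfl

theorem opProd_reciprocal_exp (n : ℕ) (hn : 1 ≤ n) :
    opProd n (fun i => (1 : ℝ) / (i.1 + 1)) Real.exp =
      fun x => (∑ j ∈ Finset.range (n + 1), (1 / (j.factorial : ℝ)) * (n.choose j : ℝ) * x ^ j) *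
        Real.exp x := by
  have h1 : Real.exp = fun x => (1 : Polynomial ℝ).eval x * Real.exp x := by
    funext x; simp
  conv_lhs => rw [h1]
  rw [opProd_poly, Rn_one]
  funext x
  simp [pPoly, Polynomial.eval_finset_sum]
end
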